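/- arXiv:2201.01969 — 5 statements merged into one kernel-verified Lean document; each statement's English description precedes it below -/
import Mathlib

section
/- Let N ≥ 1 and let A be an N×N real matrix with nonnegative entries that is doubly stochastic (all row sums and all column sums equal 1). Assume additionally that every diagonal entry of A is strictly positive and that A is irreducible, i.e., for all indices i, j there exists k ≥ 1 with (A^k)_{ij} > 0. Then ‖A − J‖ < 1, where J = (1/N)·𝟙𝟙ᵀ is the N×N matrix with every entry 1/N and ‖·‖ denotes the spectral norm (the operator norm induced by the Euclidean vector norm). -/
open Matrix
open scoped Matrix.Norms.L2Operator

/-- A continuous linear endomorphism of a finite-dimensional Euclidean space that strictly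
contracts every nonzero vector has operator norm `< 1`. -/
lemma aux_opNorm_lt_one {N : ℕ} (hN : 1 ≤ N)
    (f : EuclideanSpace ℝ (Fin N) →L[ℝ] EuclideanSpace ℝ (Fin N))
    (h : ∀ x : EuclideanSpace ℝ (Fin N), x ≠ 0 → ‖f x‖ < ‖x‖) : ‖f‖ < 1 := by
  have i0 : Fin N := ⟨0, hN⟩
  have hx1 : (EuclideanSpace.single i0 (1:ℝ) : EuclideanSpace ℝ (Fin N)) ∈
      Metric.sphere (0 : EuclideanSpace ℝ (Fin N)) 1 := by
    simp [EuclideanSpace.norm_single]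
  have hne : (Metric.sphere (0 : EuclideanSpace ℝ (Fin N)) 1).Nonempty := ⟨_, hx1⟩
  have hcpt : IsCompact (Metric.sphere (0 : EuclideanSpace ℝ (Fin N)) 1) :=
    isCompact_sphere _ _
  obtain ⟨x₀, hx₀mem, hx₀max⟩ := hcpt.exists_isMaxOn hne
    ((continuous_norm.comp f.continuous).continuousOn)
  have hx₀ : ∀ y ∈ Metric.sphere (0 : EuclideanSpace ℝ (Fin N)) 1, ‖f y‖ ≤ ‖f x₀‖ :=
    fun y hy => hx₀max hy
  have hx₀norm : ‖x₀‖ = 1 := by simpa using hx₀mem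
  have hx₀ne : x₀ ≠ 0 := by
    intro h0; rw [h0] at hx₀norm; simp at hx₀norm
  have hlt : ‖f x₀‖ < 1 := by
    have := h x₀ hx₀ne; rwa [hx₀norm] at this
  have hle : ‖f‖ ≤ ‖f x₀‖ := by
    apply f.opNorm_le_bound (norm_nonneg _)
    intro x
    by_cases hx : x = 0
    · simp [hx]
    · have hxn : ‖x‖ ≠ 0 := norm_ne_zero_iff.mpr hx
      have hmem : (‖x‖⁻¹ • x : EuclideanSpace ℝ (Fin N)) ∈
          Metric.sphere (0 : EuclideanSpace ℝ (Fin N)) 1 := by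
        simp [norm_smul, abs_of_nonneg (inv_nonneg.mpr (norm_nonneg x)),
          inv_mul_cancel₀ hxn]
      have := hx₀ _ hmem
      rw [f.map_smul, norm_smul] at this
      simp only [norm_inv, norm_norm] at this
      calc ‖f x‖ = ‖x‖ * (‖x‖⁻¹ * ‖f x‖) := by field_simp
        _ ≤ ‖x‖ * ‖f x₀‖ := by
            exact mul_le_mul_of_nonneg_left this (norm_nonneg x)
        _ = ‖f x₀‖ * ‖x‖ := mul_comm _ _
  exact lt_of_le_of_lt hle hlt

/-- Entries of powers of an entrywise-nonnegative matrix are nonnegative. -/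
lemma aux_pow_nonneg {N : ℕ} (A : Matrix (Fin N) (Fin N) ℝ)
    (hA : ∀ i j, 0 ≤ A i j) : ∀ k i j, 0 ≤ (A ^ k) i j := by
  intro k
  induction k with
  | zero => intro i j; simp [Matrix.one_apply]; split <;> norm_num
  | succ n ih =>
    intro i j
    rw [pow_succ, Matrix.mul_apply]
    exact Finset.sum_nonneg fun l _ => mul_nonneg (ih i l) (hA l j)

/-- Connectivity: if `y` is constant along positive entries of `A`, it is constant along
positive entries of every power of `A`. -/
lemma aux_pow_connect {N : ℕ} (A : Matrix (Fin N) (Fin N) ℝ)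
    (hA : ∀ i j, 0 ≤ A i j) (y : Fin N → ℝ)
    (hy : ∀ i j, 0 < A i j → y i = y j) :
    ∀ k i j, 0 < (A ^ k) i j → y i = y j := by
  intro k
  induction k with
  | zero =>
    intro i j h
    simp [Matrix.one_apply] at h
    split at h
    · exact by rename_i heq; rw [heq]
    · norm_num at h
  | succ n ih =>
    intro i j h
    rw [pow_succ, Matrix.mul_apply] at h
    have : ∃ l : Fin N, 0 < (A ^ n) i l * A l j := by
      by_contra hc
      push_neg at hc
      have : ∑ l, (A ^ n) i l * A l j ≤ 0 := Finset.sum_nonpos fun l _ => hc l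
      linarith
    obtain ⟨l, hl⟩ := this
    have ha := aux_pow_nonneg A hA n i l
    have hb := hA l j
    have h1 : 0 < (A ^ n) i l := by nlinarith
    have h2 : 0 < A l j := by nlinarith
    exact (ih i l h1).trans (hy l j h2)

/-- If `A` is an `N × N` doubly stochastic matrix with nonnegative entries,
strictly positive diagonal, and `A` is irreducible, then `‖A − J‖ < 1` in the spectral
norm, where `J = (1/N)·𝟙𝟙ᵀ`. -/
theorem stmt1 (N : ℕ) (hN : 1 ≤ N)
    (A : Matrix (Fin N) (Fin N) ℝ)
    (hA_nonneg : ∀ i j, 0 ≤ A i j)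
    (hA_row : ∀ i, ∑ j, A i j = 1)
    (hA_col : ∀ j, ∑ i, A i j = 1)
    (hA_diag : ∀ i, 0 < A i i)
    (hA_irred : ∀ i j, ∃ k : ℕ, 1 ≤ k ∧ 0 < (A ^ k) i j)
    (J : Matrix (Fin N) (Fin N) ℝ)
    (hJ : ∀ i j, J i j = 1 / N) :
    ‖A - J‖ < 1 := by
  have hNpos : (0:ℝ) < N := by exact_mod_cast hN
  -- the Gram matrix M = Aᵀ A
  set M : Matrix (Fin N) (Fin N) ℝ := Aᵀ * A with hM
  have hM_apply : ∀ i j, M i j = ∑ k, A k i * A k j := by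
    intro i j; simp [hM, Matrix.mul_apply, Matrix.transpose_apply]
  have hM_nonneg : ∀ i j, 0 ≤ M i j := fun i j => by
    rw [hM_apply]; exact Finset.sum_nonneg fun k _ => mul_nonneg (hA_nonneg k i) (hA_nonneg k j)
  have hM_row : ∀ i, ∑ j, M i j = 1 := by
    intro i
    simp only [hM_apply]
    rw [Finset.sum_comm]
    calc ∑ k, ∑ j, A k i * A k j = ∑ k, A k i * ∑ j, A k j := by
          simp [Finset.mul_sum]
      _ = ∑ k, A k i := by simp [hA_row]
      _ = 1 := hA_col i
  have hM_col : ∀ j, ∑ i, M i j = 1 := by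
    intro j
    simp only [hM_apply]
    rw [Finset.sum_comm]
    calc ∑ k, ∑ i, A k i * A k j = ∑ k, (∑ i, A k i) * A k j := by
          simp [Finset.sum_mul]
      _ = ∑ k, A k j := by simp [hA_row]
      _ = 1 := hA_col j
  -- M has positive entries wherever A does
  have hM_pos : ∀ i j, 0 < A i j → 0 < M i j := by
    intro i j hij
    rw [hM_apply]
    have : 0 < A i i * A i j := mul_pos (hA_diag i) hij
    exact Finset.sum_pos' (fun k _ => mul_nonneg (hA_nonneg k i) (hA_nonneg k j))
      ⟨i, Finset.mem_univ i, this⟩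
  -- quadratic form inequality: for mean-zero nonzero y, yᵀMy < ‖y‖²
  have hQuad : ∀ y : Fin N → ℝ, (∑ i, y i = 0) → y ≠ 0 →
      ∑ i, ∑ j, M i j * (y i * y j) < ∑ i, (y i)^2 := by
    intro y hsum hy
    have key : (∑ i, (y i)^2) - ∑ i, ∑ j, M i j * (y i * y j)
        = (1/2) * ∑ i, ∑ j, M i j * (y i - y j)^2 := by
      have expand : ∀ i j, M i j * (y i - y j)^2
          = M i j * (y i)^2 - 2 * (M i j * (y i * y j)) + M i j * (y j)^2 := by
        intro i j; ring
      simp only [expand, Finset.sum_add_distrib, Finset.sum_sub_distrib]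
      have h1 : ∑ i, ∑ j, M i j * (y i)^2 = ∑ i, (y i)^2 := by
        calc ∑ i, ∑ j, M i j * (y i)^2 = ∑ i, (∑ j, M i j) * (y i)^2 := by
              simp [Finset.sum_mul]
          _ = ∑ i, (y i)^2 := by simp [hM_row]
      have h2 : ∑ i, ∑ j, M i j * (y j)^2 = ∑ i, (y i)^2 := by
        rw [Finset.sum_comm]
        calc ∑ j, ∑ i, M i j * (y j)^2 = ∑ j, (∑ i, M i j) * (y j)^2 := by
              simp [Finset.sum_mul]
          _ = ∑ j, (y j)^2 := by simp [hM_col]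
      have h3 : ∑ i, ∑ j, 2 * (M i j * (y i * y j))
          = 2 * ∑ i, ∑ j, M i j * (y i * y j) := by
        simp [Finset.mul_sum]
      rw [h1, h2, h3]
      ring
    have hpos : 0 < ∑ i, ∑ j, M i j * (y i - y j)^2 := by
      rcases (Finset.sum_nonneg (fun i _ => Finset.sum_nonneg fun j _ =>
        mul_nonneg (hM_nonneg i j) (sq_nonneg _))).lt_or_eq with h | h
      · exact h
      · exfalso
        -- all terms vanish
        have hzero : ∀ i j, M i j * (y i - y j)^2 = 0 := by
          intro i j
          have houter := (Finset.sum_eq_zero_iff_of_nonneg (fun i _ =>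
            Finset.sum_nonneg fun j _ => mul_nonneg (hM_nonneg i j) (sq_nonneg _))).mp h.symm
          have hinner := (Finset.sum_eq_zero_iff_of_nonneg (fun j _ =>
            mul_nonneg (hM_nonneg i j) (sq_nonneg _))).mp (houter i (Finset.mem_univ i))
          exact hinner j (Finset.mem_univ j)
        have hyM : ∀ i j, 0 < M i j → y i = y j := by
          intro i j hMij
          have := hzero i j
          have h2 : (y i - y j)^2 = 0 := by
            rcases mul_eq_zero.mp this with h' | h'
            · exact absurd h' (ne_of_gt hMij)
            · exact h'
          have := pow_eq_zero_iff (n := 2) (by norm_num) |>.mp h2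
          linarith
        have hyA : ∀ i j, 0 < A i j → y i = y j := fun i j h => hyM i j (hM_pos i j h)
        -- connectivity via irreducibility
        have hconst : ∀ i j, y i = y j := by
          intro i j
          obtain ⟨k, _, hk⟩ := hA_irred i j
          exact aux_pow_connect A hA_nonneg y hyA k i j hk
        -- so y is constant; with zero sum, y = 0
        have i0 : Fin N := ⟨0, hN⟩
        have : ∑ i, y i = N * y i0 := by
          rw [Finset.sum_congr rfl (fun i _ => hconst i i0)]
          simp [mul_comm]
        have hy0 : y i0 = 0 := by
          rw [hsum] at this
          have := this.symm
          rcases mul_eq_zero.mp this with h' | h'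
          · exact absurd h' (ne_of_gt hNpos)
          · exact h'
        apply hy
        funext i
        rw [hconst i i0, hy0]; rfl
    linarith [hpos, key]
  -- core pointwise strict contraction
  have hcore : ∀ x : Fin N → ℝ, x ≠ 0 →
      ∑ i, (((A - J) *ᵥ x) i)^2 < ∑ i, (x i)^2 := by
    intro x hx
    set c : ℝ := (∑ j, x j) / N with hc
    set y : Fin N → ℝ := fun i => x i - c with hy
    have hysum : ∑ i, y i = 0 := by
      simp only [hy, Finset.sum_sub_distrib]
      simp [hc]
      field_simp
      ring
    have hBx : ∀ i, ((A - J) *ᵥ x) i = (A *ᵥ y) i := by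
      intro i
      simp only [Matrix.mulVec, dotProduct, Matrix.sub_apply, hJ, hy]
      rw [Finset.sum_congr rfl (fun j _ => by ring_nf :
        ∀ j ∈ Finset.univ, (A i j - 1/(N:ℝ)) * x j = A i j * x j - x j * (N:ℝ)⁻¹)]
      rw [Finset.sum_congr rfl (fun j _ => by ring :
        ∀ j ∈ Finset.univ, A i j * (x j - c) = A i j * x j - A i j * c)]
      rw [Finset.sum_sub_distrib, Finset.sum_sub_distrib]
      congr 1
      rw [← Finset.sum_mul, ← Finset.sum_mul, hA_row, hc]
      field_simp
    have hxy : ∑ i, (x i)^2 = (∑ i, (y i)^2) + N * c^2 := by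
      have : ∀ i, (x i)^2 = (y i)^2 + 2 * c * y i + c^2 := by
        intro i; simp only [hy]; ring
      simp only [this, Finset.sum_add_distrib]
      rw [← Finset.mul_sum, hysum]
      simp [mul_comm]
    by_cases hy0 : y = 0
    · have hB0 : ∀ i, ((A - J) *ᵥ x) i = 0 := by
        intro i; rw [hBx i, hy0]; simp [Matrix.mulVec]
      have hxpos : 0 < ∑ i, (x i)^2 := by
        obtain ⟨i, hi⟩ := Function.ne_iff.mp hx
        exact Finset.sum_pos' (fun j _ => sq_nonneg _)
          ⟨i, Finset.mem_univ i, sq_pos_of_ne_zero hi⟩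
      calc ∑ i, (((A - J) *ᵥ x) i)^2 = 0 := by simp [hB0]
        _ < ∑ i, (x i)^2 := hxpos
    · have hAy : ∑ i, ((A *ᵥ y) i)^2 = ∑ i, ∑ j, M i j * (y i * y j) := by
        have lhs : ∀ k, ((A *ᵥ y) k)^2 = ∑ i, ∑ j, (A k i * y i) * (A k j * y j) := by
          intro k
          simp only [Matrix.mulVec, dotProduct, sq]
          rw [Finset.sum_mul_sum]
        simp only [lhs]
        rw [Finset.sum_comm]
        apply Finset.sum_congr rfl
        intro i _
        rw [Finset.sum_comm]
        apply Finset.sum_congr rfl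
        intro j _
        rw [hM_apply, Finset.sum_mul]
        apply Finset.sum_congr rfl
        intro k _
        ring
      have h1 : ∑ i, ∑ j, M i j * (y i * y j) < ∑ i, (y i)^2 := hQuad y hysum hy0
      have h2 : (∑ i, (y i)^2) ≤ ∑ i, (x i)^2 := by
        rw [hxy]; nlinarith [sq_nonneg c, hNpos]
      calc ∑ i, (((A - J) *ᵥ x) i)^2 = ∑ i, ((A *ᵥ y) i)^2 := by
            apply Finset.sum_congr rfl; intro i _; rw [hBx i]
        _ = ∑ i, ∑ j, M i j * (y i * y j) := hAy
        _ < ∑ i, (y i)^2 := h1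
        _ ≤ ∑ i, (x i)^2 := h2
  -- convert to operator norm
  rw [Matrix.l2_opNorm_def]
  apply aux_opNorm_lt_one hN
  intro x hx
  have hx' : (WithLp.equiv 2 (Fin N → ℝ) x) ≠ 0 := by
    intro h; apply hx
    exact (WithLp.equiv 2 (Fin N → ℝ)).injective (by simpa using h)
  have hlt := hcore (WithLp.equiv 2 (Fin N → ℝ) x) hx'
  have happ : ((Matrix.toEuclideanLin.trans LinearMap.toContinuousLinearMap) (A - J)) x
      = (WithLp.equiv 2 (Fin N → ℝ)).symm ((A - J) *ᵥ (WithLp.equiv 2 (Fin N → ℝ) x)) := rfl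
  rw [happ]
  rw [EuclideanSpace.norm_eq, EuclideanSpace.norm_eq]
  apply Real.sqrt_lt_sqrt
  · exact Finset.sum_nonneg fun i _ => sq_nonneg _
  · simpa [Real.norm_eq_abs, sq_abs] using hlt
end

section
/- Let N, n, r ≥ 1, let A be an N×N real matrix with nonnegative entries that is doubly stochastic (all row sums and all column sums equal 1), set L = I_N − A, κ := ‖A − J‖ (spectral norm) with J = (1/N)·𝟙𝟙ᵀ. Let g₁, …, g_N : ℝⁿ → ℝʳ each be l₃-Lipschitz. Let x, x⁺ ∈ (ℝⁿ)^N and χ, e ∈ (ℝʳ)^N, and define χ⁺ ∈ (ℝʳ)^N by χ⁺ᵢ := Σⱼ L_{ij}·eⱼ + gᵢ(x⁺ᵢ) − gᵢ(xᵢ) + Σⱼ A_{ij}·χⱼ. Writing χ̄⁺ := (1/N)Σᵢ χ⁺ᵢ and χ̄ := (1/N)Σᵢ χᵢ, one has ‖χ⁺ − 𝟙_N ⊗ χ̄⁺‖ ≤ κ·‖χ − 𝟙_N ⊗ χ̄‖ + 2‖e‖ + l₃·‖x⁺ − x‖, where block tuples carry the Euclidean norm ‖v‖ = (Σᵢ‖vᵢ‖²)^{1/2}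 and 𝟙_N ⊗ χ̄ denotes the N-tuple with every block equal to χ̄. -/
open Matrix
open scoped Matrix.Norms.L2Operator


lemma mulVec_sq_le {N : ℕ} (M : Matrix (Fin N) (Fin N) ℝ) (u : EuclideanSpace ℝ (Fin N)) :
    ∑ i, (M.mulVec u i)^2 ≤ ‖M‖^2 * ∑ j, (u j)^2 := by
  have h := M.l2_opNorm_mulVec u
  have h1 : ‖(EuclideanSpace.equiv (Fin N) ℝ).symm (M *ᵥ u)‖^2 = ∑ i, (M.mulVec u i)^2 := by
    rw [PiLp.norm_sq_eq_of_L2]; simp [Real.norm_eq_abs, sq_abs]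
  have h2 : ‖u‖^2 = ∑ j, (u j)^2 := by
    rw [PiLp.norm_sq_eq_of_L2]; simp [Real.norm_eq_abs, sq_abs]
  have h3 := pow_le_pow_left₀ (norm_nonneg _) h 2
  rw [h1, mul_pow, h2] at h3
  exact h3

lemma centering_le {N r : ℕ} (hN : 0 < N)
    (u : PiLp 2 (fun _ : Fin N => EuclideanSpace ℝ (Fin r)))
    (ubar : EuclideanSpace ℝ (Fin r)) (h : ubar = ((N:ℝ)⁻¹) • ∑ i, u i) :
    ‖(show PiLp 2 (fun _ : Fin N => EuclideanSpace ℝ (Fin r)) from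
        WithLp.toLp 2 fun i => u i - ubar)‖ ≤ ‖u‖ := by
  have hNne : (N:ℝ) ≠ 0 := Nat.cast_ne_zero.mpr hN.ne'
  have hsum : ∑ i, u i = (N:ℝ) • ubar := by
    rw [h, smul_smul, mul_inv_cancel₀ hNne, one_smul]
  have hsq : ‖(show PiLp 2 (fun _ : Fin N => EuclideanSpace ℝ (Fin r)) from
        WithLp.toLp 2 fun i => u i - ubar)‖^2 ≤ ‖u‖^2 := by
    rw [PiLp.norm_sq_eq_of_L2, PiLp.norm_sq_eq_of_L2]
    have hexp : ∀ i : Fin N, ‖u i - ubar‖^2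
        = ‖u i‖^2 - 2 * (inner ℝ (u i) ubar : ℝ) + ‖ubar‖^2 := fun i =>
      norm_sub_sq_real _ _
    simp_rw [hexp]
    rw [Finset.sum_add_distrib, Finset.sum_sub_distrib, ← Finset.mul_sum,
      ← sum_inner (𝕜 := ℝ), Finset.sum_const, Finset.card_univ, Fintype.card_fin,
      hsum, real_inner_smul_left, real_inner_self_eq_norm_sq]
    rw [nsmul_eq_mul]
    have : (0:ℝ) ≤ (N:ℝ) * ‖ubar‖^2 := by positivity
    nlinarith
  nlinarith [norm_nonneg (show PiLp 2 (fun _ : Fin N => EuclideanSpace ℝ (Fin r)) from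
      WithLp.toLp 2 fun i => u i - ubar), norm_nonneg u]

lemma stochastic_le {N r : ℕ} (A : Matrix (Fin N) (Fin N) ℝ)
    (hA_nonneg : ∀ i j, 0 ≤ A i j) (hA_row : ∀ i, ∑ j, A i j = 1)
    (hA_col : ∀ j, ∑ i, A i j = 1)
    (e : PiLp 2 (fun _ : Fin N => EuclideanSpace ℝ (Fin r))) :
    ‖(show PiLp 2 (fun _ : Fin N => EuclideanSpace ℝ (Fin r)) from
        WithLp.toLp 2 fun i => ∑ j, A i j • e j)‖ ≤ ‖e‖ := by
  have hsq : ‖(show PiLp 2 (fun _ : Fin N => EuclideanSpace ℝ (Fin r)) from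
        WithLp.toLp 2 fun i => ∑ j, A i j • e j)‖^2 ≤ ‖e‖^2 := by
    rw [PiLp.norm_sq_eq_of_L2, PiLp.norm_sq_eq_of_L2]
    have step1 : ∀ i, ‖∑ j, A i j • e j‖ ≤ ∑ j, A i j * ‖e j‖ := by
      intro i
      refine (norm_sum_le _ _).trans (le_of_eq ?_)
      refine Finset.sum_congr rfl fun j _ => ?_
      rw [norm_smul, Real.norm_eq_abs, abs_of_nonneg (hA_nonneg i j)]
    have step2 : ∀ i, (∑ j, A i j * ‖e j‖)^2 ≤ ∑ j, A i j * ‖e j‖^2 := by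
      intro i
      have cs := Finset.sum_mul_sq_le_sq_mul_sq Finset.univ
        (fun j => Real.sqrt (A i j)) (fun j => Real.sqrt (A i j) * ‖e j‖)
      have e1 : ∀ j : Fin N, Real.sqrt (A i j) * (Real.sqrt (A i j) * ‖e j‖)
          = A i j * ‖e j‖ := by
        intro j
        rw [← mul_assoc, Real.mul_self_sqrt (hA_nonneg i j)]
      have e2 : ∀ j : Fin N, (Real.sqrt (A i j))^2 = A i j := fun j =>
        Real.sq_sqrt (hA_nonneg i j)
      have e3 : ∀ j : Fin N, (Real.sqrt (A i j) * ‖e j‖)^2 = A i j * ‖e j‖^2 := by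
        intro j
        rw [mul_pow, e2]
      simp_rw [e1, e2, e3] at cs
      rw [hA_row i, one_mul] at cs
      exact cs
    calc ∑ i, ‖∑ j, A i j • e j‖^2 ≤ ∑ i, ∑ j, A i j * ‖e j‖^2 := by
          refine Finset.sum_le_sum fun i _ => ?_
          exact le_trans (by
            have := step1 i
            have h0 : (0:ℝ) ≤ ∑ j, A i j * ‖e j‖ :=
              Finset.sum_nonneg fun j _ => mul_nonneg (hA_nonneg i j) (norm_nonneg _)
            nlinarith [norm_nonneg (∑ j, A i j • e j)]) (step2 i)
      _ = ∑ j, ‖e j‖^2 := by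
          rw [Finset.sum_comm]
          refine Finset.sum_congr rfl fun j _ => ?_
          rw [← Finset.sum_mul, hA_col j, one_mul]
  nlinarith [norm_nonneg (show PiLp 2 (fun _ : Fin N => EuclideanSpace ℝ (Fin r)) from
      WithLp.toLp 2 fun i => ∑ j, A i j • e j), norm_nonneg e]

lemma blockMat_norm_le {N r : ℕ} (M : Matrix (Fin N) (Fin N) ℝ)
    (v : PiLp 2 (fun _ : Fin N => EuclideanSpace ℝ (Fin r))) :
    ‖(show PiLp 2 (fun _ : Fin N => EuclideanSpace ℝ (Fin r)) from
        WithLp.toLp 2 fun i => ∑ j, M i j • v j)‖ ≤ ‖M‖ * ‖v‖ := by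
  have hv : ‖v‖^2 = ∑ j, ∑ k, (v j k)^2 := by
    rw [PiLp.norm_sq_eq_of_L2]
    refine Finset.sum_congr rfl fun j _ => ?_
    rw [PiLp.norm_sq_eq_of_L2]; simp [Real.norm_eq_abs, sq_abs]
  have hsq : ‖(show PiLp 2 (fun _ : Fin N => EuclideanSpace ℝ (Fin r)) from
        WithLp.toLp 2 fun i => ∑ j, M i j • v j)‖^2 ≤ ‖M‖^2 * ‖v‖^2 := by
    rw [PiLp.norm_sq_eq_of_L2, hv]
    have happ : ∀ i, ‖∑ j, M i j • v j‖^2 = ∑ k, (∑ j, M i j * v j k)^2 := by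
      intro i
      rw [PiLp.norm_sq_eq_of_L2]
      refine Finset.sum_congr rfl fun k _ => ?_
      have hk : (∑ j, M i j • v j) k = ∑ j, M i j * v j k :=
        by simp [PiLp.smul_apply]
      rw [Real.norm_eq_abs, sq_abs, hk]
    simp_rw [happ]
    have hrhs : ‖M‖^2 * ∑ j, ∑ k, (v j k)^2 = ∑ k, ‖M‖^2 * ∑ j, (v j k)^2 := by
      rw [Finset.sum_comm, Finset.mul_sum]
    rw [Finset.sum_comm, hrhs]
    refine Finset.sum_le_sum fun k _ => ?_
    have := mulVec_sq_le M (WithLp.toLp 2 fun j => v j k)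
    simpa [Matrix.mulVec, dotProduct] using this
  have h0 : (0:ℝ) ≤ ‖M‖ * ‖v‖ := by positivity
  nlinarith [norm_nonneg (show PiLp 2 (fun _ : Fin N => EuclideanSpace ℝ (Fin r)) from
        WithLp.toLp 2 fun i => ∑ j, M i j • v j)]

/-- one-step consensus-error bound for the aggregative-variable tracker.
With `A` doubly stochastic nonnegative, `L = I − A`, `κ = ‖A − J‖` (spectral norm),
`gᵢ` each `l₃`-Lipschitz and `χ⁺ᵢ = Σⱼ L_{ij} eⱼ + gᵢ(x⁺ᵢ) − gᵢ(xᵢ) + Σⱼ A_{ij} χⱼ`, one has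
`‖χ⁺ − 𝟙⊗χ̄⁺‖ ≤ κ‖χ − 𝟙⊗χ̄‖ + 2‖e‖ + l₃‖x⁺ − x‖`. -/
theorem stmt9 (N n r : ℕ) (hN : 1 ≤ N) (hn : 1 ≤ n) (hr : 1 ≤ r)
    (A : Matrix (Fin N) (Fin N) ℝ)
    (hA_nonneg : ∀ i j, 0 ≤ A i j)
    (hA_row : ∀ i, ∑ j, A i j = 1)
    (hA_col : ∀ j, ∑ i, A i j = 1)
    (L : Matrix (Fin N) (Fin N) ℝ) (hL : L = 1 - A)
    (J : Matrix (Fin N) (Fin N) ℝ) (hJ : ∀ i j, J i j = 1 / N)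
    (κ : ℝ) (hκ : κ = ‖A - J‖)
    (l₃ : ℝ) (hl₃ : 0 < l₃)
    (g : Fin N → EuclideanSpace ℝ (Fin n) → EuclideanSpace ℝ (Fin r))
    (hg_lip : ∀ i, ∀ u v, ‖g i u - g i v‖ ≤ l₃ * ‖u - v‖)
    (x xplus : PiLp 2 (fun _ : Fin N => EuclideanSpace ℝ (Fin n)))
    (χ e χplus : PiLp 2 (fun _ : Fin N => EuclideanSpace ℝ (Fin r)))
    (hχplus : ∀ i, χplus i =
      (∑ j, L i j • e j) + g i (xplus i) - g i (x i) + ∑ j, A i j • χ j)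
    (χbar χbarplus : EuclideanSpace ℝ (Fin r))
    (hχbar : χbar = ((N : ℝ)⁻¹) • ∑ i, χ i)
    (hχbarplus : χbarplus = ((N : ℝ)⁻¹) • ∑ i, χplus i) :
    ‖χplus - (show PiLp 2 (fun _ : Fin N => EuclideanSpace ℝ (Fin r)) from WithLp.toLp 2 (fun _ => χbarplus))‖
      ≤ κ * ‖χ - (show PiLp 2 (fun _ : Fin N => EuclideanSpace ℝ (Fin r)) from WithLp.toLp 2 (fun _ => χbar))‖
        + 2 * ‖e‖ + l₃ * ‖xplus - x‖ := by
  have hN0 : 0 < N := hN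
  have hNne : (N:ℝ) ≠ 0 := Nat.cast_ne_zero.mpr hN0.ne'
  set Δ : PiLp 2 (fun _ : Fin N => EuclideanSpace ℝ (Fin r)) :=
    WithLp.toLp 2 fun i => g i (xplus i) - g i (x i) with hΔ
  set T1 : PiLp 2 (fun _ : Fin N => EuclideanSpace ℝ (Fin r)) :=
    WithLp.toLp 2 fun i => e i - ∑ j, A i j • e j with hT1
  set T2 : PiLp 2 (fun _ : Fin N => EuclideanSpace ℝ (Fin r)) :=
    WithLp.toLp 2 fun i => Δ i - ((N:ℝ)⁻¹) • ∑ j, Δ j with hT2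
  set w : PiLp 2 (fun _ : Fin N => EuclideanSpace ℝ (Fin r)) :=
    WithLp.toLp 2 fun j => χ j - χbar with hw
  set T3 : PiLp 2 (fun _ : Fin N => EuclideanSpace ℝ (Fin r)) :=
    WithLp.toLp 2 fun i => ∑ j, (A - J) i j • w j with hT3
  have hLsum : ∀ i, ∑ j, L i j • e j = e i - ∑ j, A i j • e j := by
    intro i
    have h1 : ∀ j, L i j • e j = (1:Matrix (Fin N) (Fin N) ℝ) i j • e j - A i j • e j := by
      intro j; rw [hL, Matrix.sub_apply, sub_smul]
    simp_rw [h1]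
    rw [Finset.sum_sub_distrib]
    congr 1
    simp [Matrix.one_apply, ite_smul]
  have hχplus' : ∀ i, χplus i
      = (e i - ∑ j, A i j • e j) + Δ i + ∑ j, A i j • χ j := by
    intro i
    rw [hχplus i, hLsum i]
    show _ = _ + (g i (xplus i) - g i (x i)) + _
    abel
  have hcolsum : ∀ (v : PiLp 2 (fun _ : Fin N => EuclideanSpace ℝ (Fin r))),
      ∑ i, ∑ j, A i j • v j = ∑ j, v j := by
    intro v
    rw [Finset.sum_comm]
    refine Finset.sum_congr rfl fun j _ => ?_
    rw [← Finset.sum_smul, hA_col j, one_smul]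
  have hbarplus : χbarplus = (((N:ℝ)⁻¹) • ∑ j, Δ j) + χbar := by
    have hsum : ∑ i, χplus i = (∑ j, Δ j) + ∑ j, χ j := by
      simp_rw [hχplus']
      rw [Finset.sum_add_distrib, Finset.sum_add_distrib, Finset.sum_sub_distrib,
        hcolsum e, hcolsum χ, sub_self, zero_add]
    rw [hχbarplus, hsum, smul_add, hχbar]
  have hT3' : ∀ i, T3 i = (∑ j, A i j • χ j) - χbar := by
    intro i
    have expand : ∀ j, (A - J) i j • w j
        = A i j • χ j - A i j • χbar - J i j • χ j + J i j • χbar := by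
      intro j
      show (A - J) i j • (χ j - χbar) = _
      rw [Matrix.sub_apply, sub_smul]
      simp only [smul_sub]
      abel
    show ∑ j, (A - J) i j • w j = _
    simp_rw [expand]
    rw [Finset.sum_add_distrib, Finset.sum_sub_distrib, Finset.sum_sub_distrib,
      ← Finset.sum_smul, hA_row i]
    have hJχ : ∑ j, J i j • χ j = χbar := by
      have h1 : ∀ j, J i j • χ j = ((N:ℝ)⁻¹) • χ j := by
        intro j; rw [hJ i j, one_div]
      simp_rw [h1]
      rw [← Finset.smul_sum, ← hχbar]
    have hJc : ∑ j : Fin N, J i j • χbar = χbar := by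
      have h1 : ∀ j : Fin N, J i j • χbar = ((N:ℝ)⁻¹) • χbar := by
        intro j; rw [hJ i j, one_div]
      simp_rw [h1]
      rw [Finset.sum_const, Finset.card_univ, Fintype.card_fin,
        ← Nat.cast_smul_eq_nsmul ℝ, smul_smul, mul_inv_cancel₀ hNne, one_smul]
    rw [hJχ, hJc, one_smul]
    abel
  have hdecomp : χplus
      - (show PiLp 2 (fun _ : Fin N => EuclideanSpace ℝ (Fin r)) from WithLp.toLp 2 (fun _ => χbarplus))
      = T1 + T2 + T3 := by
    refine PiLp.ext fun i => ?_
    show χplus i - χbarplus = T1 i + T2 i + T3 i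
    rw [hχplus' i, hbarplus, hT3' i]
    show _ = (e i - ∑ j, A i j • e j) + (Δ i - ((N:ℝ)⁻¹) • ∑ j, Δ j) + _
    abel
  -- bound T1
  have hb1 : ‖T1‖ ≤ 2 * ‖e‖ := by
    have heq : T1 = e - (show PiLp 2 (fun _ : Fin N => EuclideanSpace ℝ (Fin r)) from
        WithLp.toLp 2 fun i => ∑ j, A i j • e j) := rfl
    rw [heq]
    have h2 := stochastic_le A hA_nonneg hA_row hA_col e
    have h3 := norm_sub_le e (show PiLp 2 (fun _ : Fin N => EuclideanSpace ℝ (Fin r)) from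
        WithLp.toLp 2 fun i => ∑ j, A i j • e j)
    linarith
  -- bound T2
  have hb2 : ‖T2‖ ≤ l₃ * ‖xplus - x‖ := by
    have h1 : ‖T2‖ ≤ ‖Δ‖ := centering_le hN0 Δ _ rfl
    have h2 : ‖Δ‖ ≤ l₃ * ‖xplus - x‖ := by
      have hsq : ‖Δ‖^2 ≤ (l₃ * ‖xplus - x‖)^2 := by
        rw [PiLp.norm_sq_eq_of_L2, mul_pow, PiLp.norm_sq_eq_of_L2, Finset.mul_sum]
        refine Finset.sum_le_sum fun i _ => ?_
        have hx : (xplus - x) i = xplus i - x i := rfl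
        rw [hx, ← mul_pow]
        exact pow_le_pow_left₀ (norm_nonneg _) (hg_lip i _ _) 2
      nlinarith [norm_nonneg Δ, norm_nonneg (xplus - x), hl₃.le,
        mul_nonneg hl₃.le (norm_nonneg (xplus - x))]
    linarith
  -- bound T3
  have hb3 : ‖T3‖ ≤ κ * ‖χ -
      (show PiLp 2 (fun _ : Fin N => EuclideanSpace ℝ (Fin r)) from WithLp.toLp 2 (fun _ => χbar))‖ := by
    have hwe : w = χ -
        (show PiLp 2 (fun _ : Fin N => EuclideanSpace ℝ (Fin r)) from WithLp.toLp 2 (fun _ => χbar)) := rfl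
    have h1 := blockMat_norm_le (A - J) w
    rw [hκ, ← hwe]
    exact h1
  rw [hdecomp]
  have htri : ‖T1 + T2 + T3‖ ≤ ‖T1‖ + ‖T2‖ + ‖T3‖ :=
    (norm_add_le _ _).trans (by linarith [norm_add_le T1 T2])
  linarith
end

section
/- Let N, n, r ≥ 1, let A be an N×N real matrix with nonnegative entries that is doubly stochastic (all row sums and all column sums equal 1), set L = I_N − A, κ := ‖A − J‖ (spectral norm) with J = (1/N)·𝟙𝟙ᵀ. Let h₁, …, h_N : ℝⁿ × ℝʳ → ℝʳ be arbitrary maps. Let x, x⁺ ∈ (ℝⁿ)^N, χ, χ⁺ ∈ (ℝʳ)^N, and y, e ∈ (ℝʳ)^N, and define y⁺ ∈ (ℝʳ)^N by y⁺ᵢ := Σⱼ L_{ij}·eⱼ + hᵢ(x⁺ᵢ, χ⁺ᵢ) − hᵢ(xᵢ, χᵢ) + Σⱼ A_{ij}·yⱼ. Writing ȳ⁺ := (1/N)Σᵢ y⁺ᵢ and ȳ := (1/N)Σᵢ yᵢ, one has ‖y⁺ − 𝟙_N ⊗ ȳ⁺‖ ≤ κ·‖y − 𝟙_N ⊗ ȳ‖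 + (Σᵢ ‖hᵢ(x⁺ᵢ, χ⁺ᵢ) − hᵢ(xᵢ, χᵢ)‖²)^{1/2} + 2‖e‖, where block tuples carry the Euclidean norm ‖v‖ = (Σᵢ‖vᵢ‖²)^{1/2} and 𝟙_N ⊗ ȳ denotes the N-tuple with every block equal to ȳ. -/
open Matrix
open scoped Matrix.Norms.L2Operator

lemma lemA {N : ℕ} {V : Type*} [NormedAddCommGroup V] [InnerProductSpace ℝ V]
    (v : Fin N → V) :
    ∑ i, ‖v i - (N : ℝ)⁻¹ • ∑ k, v k‖ ^ 2 ≤ ∑ i, ‖v i‖ ^ 2 := by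
  rcases Nat.eq_zero_or_pos N with h0 | hpos
  · subst h0; simp
  have hNne : (N : ℝ) ≠ 0 := by positivity
  set m : V := (N : ℝ)⁻¹ • ∑ k, v k with hm
  have hsum : ∑ k, v k = (N : ℝ) • m := by
    rw [hm, smul_smul, mul_inv_cancel₀ hNne, one_smul]
  calc ∑ i, ‖v i - m‖ ^ 2
      = ∑ i, (‖v i‖ ^ 2 - 2 * inner ℝ (v i) m + ‖m‖ ^ 2) := by
        refine Finset.sum_congr rfl fun i _ => ?_
        exact norm_sub_sq_real _ _
    _ = (∑ i, ‖v i‖ ^ 2) - 2 * inner ℝ (∑ i, v i) m + (N : ℝ) * ‖m‖ ^ 2 := by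
        rw [Finset.sum_add_distrib, Finset.sum_sub_distrib, sum_inner, Finset.sum_const,
          Finset.card_univ, Fintype.card_fin, nsmul_eq_mul, ← Finset.mul_sum]
    _ = (∑ i, ‖v i‖ ^ 2) - (N : ℝ) * ‖m‖ ^ 2 := by
        rw [hsum, real_inner_smul_left, real_inner_self_eq_norm_sq]; ring
    _ ≤ ∑ i, ‖v i‖ ^ 2 := by
        have h0 : (0:ℝ) ≤ (N:ℝ) := by positivity
        nlinarith [sq_nonneg ‖m‖]

lemma lemB {N : ℕ} {V : Type*} [NormedAddCommGroup V] [Module ℝ V] [NormSMulClass ℝ V]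
    (A : Matrix (Fin N) (Fin N) ℝ)
    (hnn : ∀ i j, 0 ≤ A i j) (hrow : ∀ i, ∑ j, A i j = 1) (hcol : ∀ j, ∑ i, A i j = 1)
    (v : Fin N → V) :
    ∑ i, ‖∑ j, A i j • v j‖ ^ 2 ≤ ∑ j, ‖v j‖ ^ 2 := by
  have step1 : ∀ i, ‖∑ j, A i j • v j‖ ^ 2 ≤ ∑ j, A i j * ‖v j‖ ^ 2 := by
    intro i
    have t1 : ‖∑ j, A i j • v j‖ ≤ ∑ j, A i j * ‖v j‖ := by
      refine (norm_sum_le _ _).trans (le_of_eq ?_)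
      refine Finset.sum_congr rfl fun j _ => ?_
      rw [norm_smul, Real.norm_eq_abs, abs_of_nonneg (hnn i j)]
    have t2 : (∑ j, A i j * ‖v j‖) ^ 2 ≤ (∑ j, A i j) * (∑ j, A i j * ‖v j‖ ^ 2) := by
      have := Finset.sum_mul_sq_le_sq_mul_sq Finset.univ
        (fun j => Real.sqrt (A i j)) (fun j => Real.sqrt (A i j) * ‖v j‖)
      have e1 : ∀ j : Fin N, Real.sqrt (A i j) * (Real.sqrt (A i j) * ‖v j‖)
          = A i j * ‖v j‖ := fun j => by
        rw [← mul_assoc, Real.mul_self_sqrt (hnn i j)]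
      have e2 : ∀ j : Fin N, Real.sqrt (A i j) ^ 2 = A i j := fun j =>
        Real.sq_sqrt (hnn i j)
      have e3 : ∀ j : Fin N, (Real.sqrt (A i j) * ‖v j‖) ^ 2 = A i j * ‖v j‖ ^ 2 :=
        fun j => by rw [mul_pow, Real.sq_sqrt (hnn i j)]
      simpa only [e1, e2, e3] using this
    calc ‖∑ j, A i j • v j‖ ^ 2 ≤ (∑ j, A i j * ‖v j‖) ^ 2 :=
          pow_le_pow_left₀ (norm_nonneg _) t1 2
      _ ≤ (∑ j, A i j) * (∑ j, A i j * ‖v j‖ ^ 2) := t2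
      _ = ∑ j, A i j * ‖v j‖ ^ 2 := by rw [hrow, one_mul]
  calc ∑ i, ‖∑ j, A i j • v j‖ ^ 2 ≤ ∑ i, ∑ j, A i j * ‖v j‖ ^ 2 :=
        Finset.sum_le_sum fun i _ => step1 i
    _ = ∑ j, (∑ i, A i j) * ‖v j‖ ^ 2 := by
        rw [Finset.sum_comm]
        exact Finset.sum_congr rfl fun j _ => (Finset.sum_mul _ _ _).symm
    _ = ∑ j, ‖v j‖ ^ 2 := by simp [hcol]

lemma eucl_norm_sq {r : ℕ} (u : EuclideanSpace ℝ (Fin r)) : ‖u‖ ^ 2 = ∑ k, (u k) ^ 2 := by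
  rw [EuclideanSpace.norm_eq, Real.sq_sqrt (by positivity)]
  exact Finset.sum_congr rfl fun k _ => by rw [Real.norm_eq_abs, sq_abs]

lemma lemC {N r : ℕ} (B : Matrix (Fin N) (Fin N) ℝ) (w : Fin N → EuclideanSpace ℝ (Fin r)) :
    ∑ i, ‖∑ j, B i j • w j‖ ^ 2 ≤ ‖B‖ ^ 2 * ∑ j, ‖w j‖ ^ 2 := by
  have happly : ∀ (i : Fin N) (k : Fin r), (∑ j, B i j • w j) k = ∑ j, B i j * w j k := by
    intro i k
    rw [WithLp.ofLp_sum]; simp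
  calc ∑ i, ‖∑ j, B i j • w j‖ ^ 2
      = ∑ i, ∑ k, (∑ j, B i j * w j k) ^ 2 := by
        refine Finset.sum_congr rfl fun i _ => ?_
        rw [eucl_norm_sq]
        exact Finset.sum_congr rfl fun k _ => by rw [happly]
    _ = ∑ k, ∑ i, (B.mulVec (fun j => w j k)) i ^ 2 := by
        rw [Finset.sum_comm]
        simp only [Matrix.mulVec, dotProduct]
    _ = ∑ k, ‖(EuclideanSpace.equiv (Fin N) ℝ).symm (B.mulVec (fun j => w j k))‖ ^ 2 := by
        refine Finset.sum_congr rfl fun k _ => ?_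
        rw [eucl_norm_sq]
        simp
    _ ≤ ∑ k, (‖B‖ * ‖(EuclideanSpace.equiv (Fin N) ℝ).symm (fun j => w j k)‖) ^ 2 := by
        refine Finset.sum_le_sum fun k _ => ?_
        refine pow_le_pow_left₀ (norm_nonneg _) ?_ 2
        exact B.l2_opNorm_mulVec ((EuclideanSpace.equiv (Fin N) ℝ).symm (fun j => w j k))
    _ = ‖B‖ ^ 2 * ∑ j, ‖w j‖ ^ 2 := by
        simp_rw [mul_pow]
        rw [← Finset.mul_sum]
        congr 1
        calc ∑ k, ‖(EuclideanSpace.equiv (Fin N) ℝ).symm (fun j => w j k)‖ ^ 2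
            = ∑ k, ∑ j, (w j k) ^ 2 := by
              refine Finset.sum_congr rfl fun k _ => ?_
              rw [eucl_norm_sq]
              simp
          _ = ∑ j, ∑ k, (w j k) ^ 2 := Finset.sum_comm
          _ = ∑ j, ‖w j‖ ^ 2 := by
              exact Finset.sum_congr rfl fun j _ => (eucl_norm_sq (w j)).symm

lemma lemBound {N r : ℕ} (u : PiLp 2 (fun _ : Fin N => EuclideanSpace ℝ (Fin r)))
    (c : ℝ) (hc : 0 ≤ c) (hle : ∑ i, ‖u i‖ ^ 2 ≤ c ^ 2) : ‖u‖ ≤ c := by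
  rw [PiLp.norm_eq_of_L2]
  calc Real.sqrt (∑ i, ‖u i‖ ^ 2) ≤ Real.sqrt (c ^ 2) := Real.sqrt_le_sqrt hle
    _ = c := Real.sqrt_sq hc

lemma lemWsq {N r : ℕ} (u : PiLp 2 (fun _ : Fin N => EuclideanSpace ℝ (Fin r))) :
    ‖u‖ ^ 2 = ∑ i, ‖u i‖ ^ 2 := PiLp.norm_sq_eq_of_L2 _ u

/-- one-step consensus-error bound for the gradient-sum tracker.
With `A` doubly stochastic nonnegative, `L = I − A`, `κ = ‖A − J‖` (spectral norm),
arbitrary maps `hᵢ : ℝⁿ × ℝʳ → ℝʳ` and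
`y⁺ᵢ = Σⱼ L_{ij} eⱼ + hᵢ(x⁺ᵢ, χ⁺ᵢ) − hᵢ(xᵢ, χᵢ) + Σⱼ A_{ij} yⱼ`, one has
`‖y⁺ − 𝟙⊗ȳ⁺‖ ≤ κ‖y − 𝟙⊗ȳ‖ + (Σᵢ‖hᵢ(x⁺ᵢ,χ⁺ᵢ) − hᵢ(xᵢ,χᵢ)‖²)^{1/2} + 2‖e‖`. -/
theorem stmt10 (N n r : ℕ) (hN : 1 ≤ N) (hn : 1 ≤ n) (hr : 1 ≤ r)
    (A : Matrix (Fin N) (Fin N) ℝ)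
    (hA_nonneg : ∀ i j, 0 ≤ A i j)
    (hA_row : ∀ i, ∑ j, A i j = 1)
    (hA_col : ∀ j, ∑ i, A i j = 1)
    (L : Matrix (Fin N) (Fin N) ℝ) (hL : L = 1 - A)
    (J : Matrix (Fin N) (Fin N) ℝ) (hJ : ∀ i j, J i j = 1 / N)
    (κ : ℝ) (hκ : κ = ‖A - J‖)
    (h : Fin N → EuclideanSpace ℝ (Fin n) → EuclideanSpace ℝ (Fin r) →
      EuclideanSpace ℝ (Fin r))
    (x xplus : PiLp 2 (fun _ : Fin N => EuclideanSpace ℝ (Fin n)))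
    (χ χplus y e yplus : PiLp 2 (fun _ : Fin N => EuclideanSpace ℝ (Fin r)))
    (hyplus : ∀ i, yplus i =
      (∑ j, L i j • e j) + h i (xplus i) (χplus i) - h i (x i) (χ i) + ∑ j, A i j • y j)
    (ybar ybarplus : EuclideanSpace ℝ (Fin r))
    (hybar : ybar = ((N : ℝ)⁻¹) • ∑ i, y i)
    (hybarplus : ybarplus = ((N : ℝ)⁻¹) • ∑ i, yplus i) :
    ‖yplus - (show PiLp 2 (fun _ : Fin N => EuclideanSpace ℝ (Fin r)) from WithLp.toLp 2 (fun _ => ybarplus))‖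
      ≤ κ * ‖y - (show PiLp 2 (fun _ : Fin N => EuclideanSpace ℝ (Fin r)) from WithLp.toLp 2 (fun _ => ybar))‖
        + Real.sqrt (∑ i, ‖h i (xplus i) (χplus i) - h i (x i) (χ i)‖ ^ 2)
        + 2 * ‖e‖ := by
  have hNne : (N : ℝ) ≠ 0 := by positivity
  set Δ : Fin N → EuclideanSpace ℝ (Fin r) :=
    fun i => h i (xplus i) (χplus i) - h i (x i) (χ i) with hΔ
  set T : PiLp 2 (fun _ : Fin N => EuclideanSpace ℝ (Fin r)) :=
    WithLp.toLp 2 (fun i => ∑ j, (A - J) i j • (y j - ybar)) with hTdef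
  set D : PiLp 2 (fun _ : Fin N => EuclideanSpace ℝ (Fin r)) :=
    WithLp.toLp 2 (fun i => Δ i - (N:ℝ)⁻¹ • ∑ k, Δ k) with hDdef
  set E1 : PiLp 2 (fun _ : Fin N => EuclideanSpace ℝ (Fin r)) :=
    WithLp.toLp 2 (fun i => e i - (N:ℝ)⁻¹ • ∑ k, e k) with hE1def
  set E2 : PiLp 2 (fun _ : Fin N => EuclideanSpace ℝ (Fin r)) :=
    WithLp.toLp 2 (fun i => (∑ j, A i j • e j) - (N:ℝ)⁻¹ • ∑ k, ∑ j, A k j • e j) with hE2def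
  -- generic column-sum fact
  have colsum : ∀ v : Fin N → EuclideanSpace ℝ (Fin r),
      ∑ k, ∑ j, A k j • v j = ∑ j, v j := by
    intro v
    rw [Finset.sum_comm]
    refine Finset.sum_congr rfl fun j _ => ?_
    rw [← Finset.sum_smul, hA_col, one_smul]
  -- L applied to e
  have hLe : ∀ i, ∑ j, L i j • e j = e i - ∑ j, A i j • e j := by
    intro i
    rw [hL]
    have expand : ∀ j : Fin N, ((1 : Matrix (Fin N) (Fin N) ℝ) - A) i j • e j
        = (1 : Matrix (Fin N) (Fin N) ℝ) i j • e j - A i j • e j := by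
      intro j; rw [Matrix.sub_apply, sub_smul]
    rw [Finset.sum_congr rfl fun j _ => expand j, Finset.sum_sub_distrib]
    congr 1
    simp [Matrix.one_apply, ite_smul]
  have hNsmul : ∀ u : EuclideanSpace ℝ (Fin r), (N : ℕ) • ((N:ℝ)⁻¹ • u) = u := by
    intro u
    rw [← Nat.cast_smul_eq_nsmul ℝ, smul_smul, mul_inv_cancel₀ hNne, one_smul]
  -- average of yplus
  have hybarplus' : ybarplus = (N : ℝ)⁻¹ • ∑ k, Δ k + ybar := by
    rw [hybarplus]
    have hsum : ∑ i, yplus i = ∑ k, Δ k + ∑ i, y i := by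
      calc ∑ i, yplus i
          = ∑ i, ((e i - ∑ j, A i j • e j) + Δ i + ∑ j, A i j • y j) := by
            refine Finset.sum_congr rfl fun i _ => ?_
            rw [hyplus i, hLe i]
            simp only [hΔ]
            abel
        _ = (∑ i, e i - ∑ i, ∑ j, A i j • e j) + ∑ k, Δ k + ∑ i, ∑ j, A i j • y j := by
            rw [Finset.sum_add_distrib, Finset.sum_add_distrib, Finset.sum_sub_distrib]
        _ = ∑ k, Δ k + ∑ i, y i := by
            rw [colsum e, colsum y]; abel
    rw [hsum, smul_add, hybar]
  -- the tracker term
  have hT' : ∀ i, ∑ j, (A - J) i j • (y j - ybar) = (∑ j, A i j • y j) - ybar := by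
    intro i
    have expand : ∀ j, (A - J) i j • (y j - ybar)
        = A i j • y j - A i j • ybar - ((N:ℝ)⁻¹ • y j - (N:ℝ)⁻¹ • ybar) := by
      intro j
      rw [Matrix.sub_apply, hJ, sub_smul, smul_sub, smul_sub, one_div]
    rw [Finset.sum_congr rfl fun j _ => expand j]
    rw [Finset.sum_sub_distrib, Finset.sum_sub_distrib, Finset.sum_sub_distrib]
    rw [← Finset.sum_smul, hA_row, one_smul, ← Finset.smul_sum, ← hybar,
      Finset.sum_const, Finset.card_univ, Fintype.card_fin, hNsmul]
    abel
  -- decomposition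
  have hdecomp :
      yplus - (show PiLp 2 (fun _ : Fin N => EuclideanSpace ℝ (Fin r)) from WithLp.toLp 2 (fun _ => ybarplus))
        = T + D + E1 - E2 := by
    rw [WithLp.ext_iff]; funext i
    simp only [WithLp.ofLp_sub, WithLp.ofLp_add, hTdef, hDdef, hE1def, hE2def, Pi.sub_apply, Pi.add_apply]
    change yplus i - ybarplus = _
    rw [hT' i, hyplus i, hLe i, hybarplus', colsum e]
    simp only [hΔ]
    abel
  -- norm bounds
  have bT : ‖T‖ ≤ κ * ‖y - (show PiLp 2 (fun _ : Fin N => EuclideanSpace ℝ (Fin r))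
      from WithLp.toLp 2 (fun _ => ybar))‖ := by
    refine lemBound _ _ (by rw [hκ]; positivity) ?_
    simp only [hTdef, PiLp.toLp_apply]
    rw [mul_pow, hκ, lemWsq]
    have key := lemC (A - J) (fun j => y j - ybar)
    have e2 : ∑ i, ‖(y - (show PiLp 2 (fun _ : Fin N => EuclideanSpace ℝ (Fin r))
        from WithLp.toLp 2 (fun _ => ybar))) i‖ ^ 2 = ∑ j, ‖y j - ybar‖ ^ 2 := by
      refine Finset.sum_congr rfl fun i _ => ?_
      rw [PiLp.sub_apply, PiLp.toLp_apply]
    rw [e2]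
    exact key
  have bD : ‖D‖ ≤ Real.sqrt (∑ i, ‖Δ i‖ ^ 2) := by
    refine lemBound _ _ (Real.sqrt_nonneg _) ?_
    simp only [hDdef, PiLp.toLp_apply]
    rw [Real.sq_sqrt (by positivity)]
    exact lemA Δ
  have bE1 : ‖E1‖ ≤ ‖e‖ := by
    refine lemBound _ _ (norm_nonneg _) ?_
    simp only [hE1def, PiLp.toLp_apply]
    rw [lemWsq]
    exact lemA e
  have bE2 : ‖E2‖ ≤ ‖e‖ := by
    refine lemBound _ _ (norm_nonneg _) ?_
    simp only [hE2def, PiLp.toLp_apply]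
    rw [lemWsq]
    calc ∑ i, ‖(∑ j, A i j • e j) - (N:ℝ)⁻¹ • ∑ k, ∑ j, A k j • e j‖ ^ 2
        ≤ ∑ i, ‖∑ j, A i j • e j‖ ^ 2 :=
          lemA (fun i => ∑ j, A i j • e j)
      _ ≤ ∑ j, ‖e j‖ ^ 2 := lemB A hA_nonneg hA_row hA_col e
  have tri : ‖yplus - (show PiLp 2 (fun _ : Fin N => EuclideanSpace ℝ (Fin r))
      from WithLp.toLp 2 (fun _ => ybarplus))‖ ≤ ‖T‖ + ‖D‖ + ‖E1‖ + ‖E2‖ := by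
    rw [hdecomp]
    refine (norm_sub_le _ _).trans ?_
    gcongr
    exact (norm_add_le _ _).trans (by gcongr; exact norm_add_le _ _)
  calc ‖yplus - (show PiLp 2 (fun _ : Fin N => EuclideanSpace ℝ (Fin r))
      from WithLp.toLp 2 (fun _ => ybarplus))‖ ≤ ‖T‖ + ‖D‖ + ‖E1‖ + ‖E2‖ := tri
    _ ≤ κ * ‖y - (show PiLp 2 (fun _ : Fin N => EuclideanSpace ℝ (Fin r))
        from WithLp.toLp 2 (fun _ => ybar))‖ + Real.sqrt (∑ i, ‖Δ i‖ ^ 2) + 2 * ‖e‖ := by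
        nlinarith [bT, bD, bE1, bE2]
    _ = κ * ‖y - (show PiLp 2 (fun _ : Fin N => EuclideanSpace ℝ (Fin r))
        from WithLp.toLp 2 (fun _ => ybar))‖
        + Real.sqrt (∑ i, ‖h i (xplus i) (χplus i) - h i (x i) (χ i)‖ ^ 2)
        + 2 * ‖e‖ := by simp only [hΔ]
end

section
/- Let H be a nonzero 3×3 real matrix, let ρ(H) denote its spectral radius (the maximum absolute value of its complex eigenvalues), and let ‖·‖ denote the spectral norm. Then for every ε with 0 < ε < 2‖H‖ and every k ∈ ℕ: ‖H^k‖ ≤ c₃·(ρ(H) + ε)^k, where c₃ = 3√3 · max{ 4‖H‖²/ε² , ε²/(4‖H‖²) }. -/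
open Matrix Polynomial
open scoped Matrix.Norms.L2Operator

lemma keyR (y : EuclideanSpace ℝ (Fin 3)) : ‖y‖^2 = ∑ j, (y j)^2 := by
  rw [EuclideanSpace.norm_eq, Real.sq_sqrt (by positivity)]
  simp [sq_abs]

lemma keyC (y : EuclideanSpace ℂ (Fin 3)) : ‖y‖^2 = ∑ j, ((y j).re^2 + (y j).im^2) := by
  rw [EuclideanSpace.norm_eq, Real.sq_sqrt (by positivity)]
  refine Finset.sum_congr rfl fun j _ => ?_
  rw [Complex.sq_norm, Complex.normSq_apply]; ring

lemma bndR (M : Matrix (Fin 3) (Fin 3) ℝ) (y : EuclideanSpace ℝ (Fin 3)) :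
    ∑ j, ((M *ᵥ y) j)^2 ≤ ‖M‖^2 * ∑ l, (y l)^2 := by
  have h := Matrix.l2_opNorm_mulVec M y
  have h2 := pow_le_pow_left₀ (norm_nonneg _) h 2
  rw [mul_pow, keyR, keyR] at h2
  convert h2 using 2 <;> rfl

lemma mulVec_coordR (M : Matrix (Fin 3) (Fin 3) ℝ) (v : Fin 3 → ℝ) (j : Fin 3) :
    (M *ᵥ v) j = ∑ l, M j l * v l := rfl

lemma mulVec_coord (M : Matrix (Fin 3) (Fin 3) ℂ) (v : Fin 3 → ℂ) (j : Fin 3) :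
    (M *ᵥ v) j = ∑ l, M j l * v l := rfl

lemma clm_apply (A : Matrix (Fin 3) (Fin 3) ℂ) (x : EuclideanSpace ℂ (Fin 3)) :
    (Matrix.toEuclideanLin.trans LinearMap.toContinuousLinearMap A) x
      = (WithLp.equiv 2 (Fin 3 → ℂ)).symm (A *ᵥ (WithLp.equiv 2 (Fin 3 → ℂ) x)) := rfl

lemma clm_applyR (A : Matrix (Fin 3) (Fin 3) ℝ) (x : EuclideanSpace ℝ (Fin 3)) :
    (Matrix.toEuclideanLin.trans LinearMap.toContinuousLinearMap A) x
      = (WithLp.equiv 2 (Fin 3 → ℝ)).symm (A *ᵥ (WithLp.equiv 2 (Fin 3 → ℝ) x)) := rfl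

lemma aux_norm_map_le (H : Matrix (Fin 3) (Fin 3) ℝ) :
    ‖H.map (algebraMap ℝ ℂ)‖ ≤ ‖H‖ := by
  rw [Matrix.l2_opNorm_def]
  refine ContinuousLinearMap.opNorm_le_bound _ (norm_nonneg H) fun x => ?_
  set A := H.map (algebraMap ℝ ℂ) with hA
  rw [clm_apply]
  set v : Fin 3 → ℂ := WithLp.equiv 2 (Fin 3 → ℂ) x with hv
  set xr : EuclideanSpace ℝ (Fin 3) := (WithLp.equiv 2 (Fin 3 → ℝ)).symm fun l => (v l).re with hxr
  set xi : EuclideanSpace ℝ (Fin 3) := (WithLp.equiv 2 (Fin 3 → ℝ)).symm fun l => (v l).im with hxi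
  have hxrl : ∀ l, xr l = (v l).re := fun l => rfl
  have hxil : ∀ l, xi l = (v l).im := fun l => rfl
  have hxl : ∀ l, x l = v l := fun l => rfl
  refine le_of_pow_le_pow_left₀ two_ne_zero (by positivity) ?_
  rw [keyC]
  have hcoord : ∀ j : Fin 3, ((WithLp.equiv 2 (Fin 3 → ℂ)).symm (A *ᵥ v)) j = (A *ᵥ v) j :=
    fun j => rfl
  have hre : ∀ j, ((A *ᵥ v) j).re = (H *ᵥ xr) j := by
    intro j
    simp only [mulVec_coord, Complex.re_sum, mulVec_coordR]
    refine Finset.sum_congr rfl fun l _ => ?_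
    rw [hxrl l, hA]
    simp [Matrix.map_apply, Complex.mul_re]
  have him : ∀ j, ((A *ᵥ v) j).im = (H *ᵥ xi) j := by
    intro j
    simp only [mulVec_coord, Complex.im_sum, mulVec_coordR]
    refine Finset.sum_congr rfl fun l _ => ?_
    rw [hxil l, hA]
    simp [Matrix.map_apply, Complex.mul_im]
  calc ∑ j, ((((WithLp.equiv 2 (Fin 3 → ℂ)).symm (A *ᵥ v)) j).re^2
        + (((WithLp.equiv 2 (Fin 3 → ℂ)).symm (A *ᵥ v)) j).im^2)
      = ∑ j, ((H *ᵥ xr) j)^2 + ∑ j, ((H *ᵥ xi) j)^2 := by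
        rw [← Finset.sum_add_distrib]
        exact Finset.sum_congr rfl fun j _ => by rw [hcoord j, hre j, him j]
    _ ≤ ‖H‖^2 * ∑ l, (xr l)^2 + ‖H‖^2 * ∑ l, (xi l)^2 := add_le_add (bndR H xr) (bndR H xi)
    _ = ‖H‖^2 * ∑ l, ((x l).re^2 + (x l).im^2) := by
        rw [← mul_add, ← Finset.sum_add_distrib]
        congr 1
    _ = (‖H‖ * ‖x‖)^2 := by rw [mul_pow, keyC]

lemma aux_le_norm_map (H : Matrix (Fin 3) (Fin 3) ℝ) :
    ‖H‖ ≤ ‖H.map (algebraMap ℝ ℂ)‖ := by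
  conv_lhs => rw [Matrix.l2_opNorm_def]
  refine ContinuousLinearMap.opNorm_le_bound _ (norm_nonneg _) fun x => ?_
  set A := H.map (algebraMap ℝ ℂ) with hA
  rw [clm_applyR]
  set v : Fin 3 → ℝ := WithLp.equiv 2 (Fin 3 → ℝ) x with hv
  set xc : EuclideanSpace ℂ (Fin 3) := (WithLp.equiv 2 (Fin 3 → ℂ)).symm fun l => (v l : ℂ) with hxc
  have hxcl : ∀ l, xc l = (v l : ℂ) := fun l => rfl
  have hxl : ∀ l, x l = v l := fun l => rfl
  have hxceq : ‖xc‖ = ‖x‖ := by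
    rw [EuclideanSpace.norm_eq, EuclideanSpace.norm_eq]
    congr 1
    refine Finset.sum_congr rfl fun l _ => ?_
    rw [hxcl l, hxl l, Complex.norm_real]
  have hAc : ∀ j, (A *ᵥ fun l => (v l : ℂ)) j = ((H *ᵥ v) j : ℂ) := by
    intro j
    rw [mulVec_coord]
    rw [mulVec_coordR]
    push_cast
    exact Finset.sum_congr rfl fun l _ => by rw [hA]; simp [Matrix.map_apply]
  have h1 : ‖(WithLp.equiv 2 (Fin 3 → ℝ)).symm (H *ᵥ v)‖ = ‖Matrix.toEuclideanLin.trans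
      LinearMap.toContinuousLinearMap A xc‖ := by
    rw [clm_apply]
    rw [EuclideanSpace.norm_eq, EuclideanSpace.norm_eq]
    congr 1
    refine Finset.sum_congr rfl fun j _ => ?_
    have h2 : ((WithLp.equiv 2 (Fin 3 → ℂ)).symm (A *ᵥ (WithLp.equiv 2 (Fin 3 → ℂ) xc))) j
        = (A *ᵥ fun l => (v l : ℂ)) j := rfl
    have h3 : ((WithLp.equiv 2 (Fin 3 → ℝ)).symm (H *ᵥ v)) j = (H *ᵥ v) j := rfl
    rw [h2, h3, hAc j, Complex.norm_real]
  rw [h1, ← hxceq]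
  exact (Matrix.toEuclideanLin.trans LinearMap.toContinuousLinearMap A).le_opNorm xc





noncomputable def dd1 (l0 l1 : ℂ) : ℕ → ℂ
  | 0 => 0
  | (k+1) => l0^k + l1 * dd1 l0 l1 k

noncomputable def dd2 (l0 l1 l2 : ℂ) : ℕ → ℂ
  | 0 => 0
  | (k+1) => dd1 l0 l1 k + l2 * dd2 l0 l1 l2 k

lemma pow_newton (l0 l1 l2 : ℂ) (k : ℕ) :
    ∃ q : Polynomial ℂ, (X : Polynomial ℂ)^k
      = C (l0^k) + C (dd1 l0 l1 k) * (X - C l0) + C (dd2 l0 l1 l2 k) * ((X - C l0) * (X - C l1))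
        + (X - C l0) * ((X - C l1) * (X - C l2)) * q := by
  induction k with
  | zero => exact ⟨0, by simp [dd1, dd2]⟩
  | succ k ih =>
    obtain ⟨q, hq⟩ := ih
    refine ⟨C (dd2 l0 l1 l2 k) + X * q, ?_⟩
    rw [pow_succ, hq]
    show _ = C (l0 ^ (k+1)) + C (dd1 l0 l1 (k+1)) * _ + C (dd2 l0 l1 l2 (k+1)) * _ + _
    rw [show dd1 l0 l1 (k+1) = l0^k + l1 * dd1 l0 l1 k from rfl,
        show dd2 l0 l1 l2 (k+1) = dd1 l0 l1 k + l2 * dd2 l0 l1 l2 k from rfl]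
    simp only [map_add, _root_.map_mul, map_pow]
    ring

-- matrix version
lemma matrix_pow_eq (A : Matrix (Fin 3) (Fin 3) ℂ) (l0 l1 l2 : ℂ)
    (hch : A.charpoly = (X - C l0) * ((X - C l1) * (X - C l2))) (k : ℕ) :
    A ^ k = (l0 ^ k) • (1 : Matrix (Fin 3) (Fin 3) ℂ)
      + (dd1 l0 l1 k) • (A - l0 • 1)
      + (dd2 l0 l1 l2 k) • ((A - l0 • 1) * (A - l1 • 1)) := by
  obtain ⟨q, hq⟩ := pow_newton l0 l1 l2 k
  have h0 : aeval A ((X - C l0) * ((X - C l1) * (X - C l2))) = 0 := by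
    rw [← hch]; exact A.aeval_self_charpoly
  have h := congrArg (aeval A) hq
  simp only [map_add, _root_.map_mul, map_pow, map_sub, aeval_X, aeval_C,
    Algebra.algebraMap_eq_smul_one] at h h0
  rw [h, h0, zero_mul, add_zero]
  simp only [smul_mul_assoc, one_mul, _root_.smul_pow, one_pow]




lemma stmt13_dd1_bound (l0 l1 : ℂ) (r e : ℝ) (he : 0 < e) (hr : 0 ≤ r)
    (h0 : ‖l0‖ ≤ r) (h1 : ‖l1‖ ≤ r) :
    ∀ k, e * ‖dd1 l0 l1 k‖ ≤ (r + e)^k := by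
  intro k
  induction k with
  | zero => simp [dd1]
  | succ k ih =>
    have hb : ‖dd1 l0 l1 (k+1)‖ ≤ ‖l0‖^k + ‖l1‖ * ‖dd1 l0 l1 k‖ := by
      rw [show dd1 l0 l1 (k+1) = l0^k + l1 * dd1 l0 l1 k from rfl]
      calc ‖l0^k + l1 * dd1 l0 l1 k‖ ≤ ‖l0^k‖ + ‖l1 * dd1 l0 l1 k‖ := norm_add_le _ _
        _ ≤ ‖l0‖^k + ‖l1‖ * ‖dd1 l0 l1 k‖ := by rw [norm_pow, norm_mul]
    have hp : ‖l0‖^k ≤ (r+e)^k := by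
      apply pow_le_pow_left₀ (norm_nonneg _)
      linarith
    have h2 : ‖l1‖ * ‖dd1 l0 l1 k‖ ≤ r * ‖dd1 l0 l1 k‖ :=
      mul_le_mul_of_nonneg_right h1 (norm_nonneg _)
    have h3 : r * (e * ‖dd1 l0 l1 k‖) ≤ r * (r+e)^k := mul_le_mul_of_nonneg_left ih hr
    have h4 : e * ‖l0‖^k ≤ e * (r+e)^k := mul_le_mul_of_nonneg_left hp he.le
    calc e * ‖dd1 l0 l1 (k+1)‖ ≤ e * (‖l0‖^k + r * ‖dd1 l0 l1 k‖) := by nlinarith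
      _ ≤ e * (r+e)^k + r * (r+e)^k := by nlinarith
      _ = (r+e)^(k+1) := by rw [pow_succ]; ring

lemma stmt13_dd2_bound (l0 l1 l2 : ℂ) (r e : ℝ) (he : 0 < e) (hr : 0 ≤ r)
    (h0 : ‖l0‖ ≤ r) (h1 : ‖l1‖ ≤ r) (h2 : ‖l2‖ ≤ r) :
    ∀ k, e^2 * ‖dd2 l0 l1 l2 k‖ ≤ (r + e)^k := by
  intro k
  induction k with
  | zero => simp [dd2]
  | succ k ih =>
    have hb : ‖dd2 l0 l1 l2 (k+1)‖ ≤ ‖dd1 l0 l1 k‖ + r * ‖dd2 l0 l1 l2 k‖ := by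
      rw [show dd2 l0 l1 l2 (k+1) = dd1 l0 l1 k + l2 * dd2 l0 l1 l2 k from rfl]
      calc ‖dd1 l0 l1 k + l2 * dd2 l0 l1 l2 k‖
          ≤ ‖dd1 l0 l1 k‖ + ‖l2‖ * ‖dd2 l0 l1 l2 k‖ := by
            refine (norm_add_le _ _).trans ?_
            rw [norm_mul]
        _ ≤ ‖dd1 l0 l1 k‖ + r * ‖dd2 l0 l1 l2 k‖ := by
            have := mul_le_mul_of_nonneg_right h2 (norm_nonneg (dd2 l0 l1 l2 k))
            linarith
    have hdd1 := stmt13_dd1_bound l0 l1 r e he hr h0 h1 k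
    have h3 : r * (e^2 * ‖dd2 l0 l1 l2 k‖) ≤ r * (r+e)^k := mul_le_mul_of_nonneg_left ih hr
    have h4 : e * (e * ‖dd1 l0 l1 k‖) ≤ e * (r+e)^k := mul_le_mul_of_nonneg_left hdd1 he.le
    calc e^2 * ‖dd2 l0 l1 l2 (k+1)‖ ≤ e^2 * (‖dd1 l0 l1 k‖ + r * ‖dd2 l0 l1 l2 k‖) := by nlinarith
      _ ≤ e * (r+e)^k + r * (r+e)^k := by nlinarith
      _ = (r+e)^(k+1) := by rw [pow_succ]; ring

lemma stmt13_root_mem_spectrum (A : Matrix (Fin 3) (Fin 3) ℂ) (lam : ℂ)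
    (h : A.charpoly.IsRoot lam) : lam ∈ spectrum ℂ A := by
  rw [spectrum.mem_iff]
  intro hu
  rw [Matrix.isUnit_iff_isUnit_det] at hu
  have hd : (algebraMap ℂ (Matrix (Fin 3) (Fin 3) ℂ) lam - A).det = A.charpoly.eval lam := by
    rw [Matrix.charpoly, _root_.eval_det]
    congr 1
    ext i j
    rw [_root_.matPolyEquiv_eval]
    by_cases hij : i = j
    · subst hij; simp [Matrix.charmatrix_apply_eq, Matrix.algebraMap_matrix_apply]
    · simp [Matrix.charmatrix_apply_ne _ _ _ hij, Matrix.algebraMap_matrix_apply, hij]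
  rw [hd, h.eq_zero] at hu
  exact hu.ne_zero rfl


set_option maxHeartbeats 1000000 in
/-- for a nonzero 3×3 real matrix `H` with spectral radius `ρ(H)` and
spectral norm `‖·‖`, for every `0 < ε < 2‖H‖` and every `k`,
`‖H^k‖ ≤ c₃ (ρ(H) + ε)^k` with `c₃ = 3√3·max{4‖H‖²/ε², ε²/(4‖H‖²)}`. -/
theorem stmt13 (H : Matrix (Fin 3) (Fin 3) ℝ) (hH : H ≠ 0)
    (ρ : ℝ) (hρ : ρ = (spectralRadius ℂ (H.map (algebraMap ℝ ℂ))).toReal)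
    (ε : ℝ) (hε0 : 0 < ε) (hε : ε < 2 * ‖H‖)
    (c₃ : ℝ)
    (hc₃ : c₃ = 3 * Real.sqrt 3 *
      max (4 * ‖H‖ ^ 2 / ε ^ 2) (ε ^ 2 / (4 * ‖H‖ ^ 2))) :
    ∀ k : ℕ, ‖H ^ k‖ ≤ c₃ * (ρ + ε) ^ k := by
  intro k
  set A : Matrix (Fin 3) (Fin 3) ℂ := H.map (algebraMap ℝ ℂ) with hAdef
  have hH0 : 0 < ‖H‖ := by
    rw [norm_pos_iff]
    exact hH
  have hρ0 : 0 ≤ ρ := hρ ▸ ENNReal.toReal_nonneg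
  -- charpoly factorization
  have hmonic : A.charpoly.Monic := A.charpoly_monic
  have hdeg : A.charpoly.natDegree = 3 := by
    rw [Matrix.charpoly_natDegree_eq_dim]
    simp
  have hsplit : A.charpoly.Splits := IsAlgClosed.splits _
  have hcard : A.charpoly.roots.card = 3 := by
    rw [(Polynomial.splits_iff_card_roots).mp hsplit, hdeg]
  obtain ⟨l0, l1, l2, hroots⟩ := Multiset.card_eq_three.mp hcard
  have hch : A.charpoly = (X - C l0) * ((X - C l1) * (X - C l2)) := by
    have := hsplit.eq_prod_roots_of_monic hmonic
    rw [hroots] at this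
    simpa using this
  -- roots in the spectrum, norms bounded by ρ and by ‖H‖
  have hnormA : ‖A‖ ≤ ‖H‖ := aux_norm_map_le H
  have hrad : ∀ lam : ℂ, lam ∈ A.charpoly.roots → (‖lam‖ ≤ ρ ∧ ‖lam‖ ≤ ‖H‖) := by
    intro lam hmem
    have hspec : lam ∈ spectrum ℂ A :=
      stmt13_root_mem_spectrum A lam (Polynomial.isRoot_of_mem_roots hmem)
    constructor
    · have h1 : (‖lam‖₊ : ENNReal) ≤ spectralRadius ℂ A :=
        le_iSup₂ (f := fun k (_ : k ∈ spectrum ℂ A) => (‖k‖₊ : ENNReal)) lam hspec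
      have h2 : spectralRadius ℂ A ≠ ⊤ :=
        ne_top_of_le_ne_top ENNReal.coe_ne_top (spectrum.spectralRadius_le_nnnorm (𝕜 := ℂ) A)
      have h3 := ENNReal.toReal_mono h2 h1
      rw [ENNReal.coe_toReal, coe_nnnorm] at h3
      rw [hρ]
      exact h3
    · exact (spectrum.norm_le_norm_of_mem hspec).trans hnormA
  have hl0 : l0 ∈ A.charpoly.roots := by rw [hroots]; simp
  have hl1 : l1 ∈ A.charpoly.roots := by rw [hroots]; simp
  have hl2 : l2 ∈ A.charpoly.roots := by rw [hroots]; simp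
  obtain ⟨hl0ρ, hl0H⟩ := hrad l0 hl0
  obtain ⟨hl1ρ, hl1H⟩ := hrad l1 hl1
  obtain ⟨hl2ρ, hl2H⟩ := hrad l2 hl2
  -- power formula and norm bound over ℂ
  have hpow := matrix_pow_eq A l0 l1 l2 hch k
  have hN : ∀ lam : ℂ, ‖lam‖ ≤ ‖H‖ → ‖A - lam • (1 : Matrix (Fin 3) (Fin 3) ℂ)‖ ≤ 2 * ‖H‖ := by
    intro lam hlam
    calc ‖A - lam • (1 : Matrix (Fin 3) (Fin 3) ℂ)‖ ≤ ‖A‖ + ‖lam • (1 : Matrix (Fin 3) (Fin 3) ℂ)‖ :=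
          norm_sub_le _ _
      _ = ‖A‖ + ‖lam‖ * ‖(1 : Matrix (Fin 3) (Fin 3) ℂ)‖ := by rw [norm_smul]
      _ = ‖A‖ + ‖lam‖ := by rw [norm_one, mul_one]
      _ ≤ 2 * ‖H‖ := by linarith
  have hAk : ‖A ^ k‖ ≤ ρ^k + ‖dd1 l0 l1 k‖ * (2*‖H‖)
      + ‖dd2 l0 l1 l2 k‖ * ((2*‖H‖) * (2*‖H‖)) := by
    rw [hpow]
    have t1 : ‖(l0 ^ k) • (1 : Matrix (Fin 3) (Fin 3) ℂ)‖ = ‖l0‖^k := by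
      rw [norm_smul, norm_one, mul_one, norm_pow]
    have t2 : ‖(dd1 l0 l1 k) • (A - l0 • (1 : Matrix (Fin 3) (Fin 3) ℂ))‖
        ≤ ‖dd1 l0 l1 k‖ * (2*‖H‖) := by
      rw [norm_smul]
      exact mul_le_mul_of_nonneg_left (hN l0 hl0H) (norm_nonneg _)
    have t3 : ‖(dd2 l0 l1 l2 k) • ((A - l0 • (1 : Matrix (Fin 3) (Fin 3) ℂ))
        * (A - l1 • 1))‖ ≤ ‖dd2 l0 l1 l2 k‖ * ((2*‖H‖) * (2*‖H‖)) := by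
      rw [norm_smul]
      refine mul_le_mul_of_nonneg_left ?_ (norm_nonneg _)
      refine (norm_mul_le _ _).trans ?_
      exact mul_le_mul (hN l0 hl0H) (hN l1 hl1H) (norm_nonneg _) (by positivity)
    have hl0k : ‖l0‖^k ≤ ρ^k := pow_le_pow_left₀ (norm_nonneg _) hl0ρ k
    calc ‖(l0 ^ k) • (1 : Matrix (Fin 3) (Fin 3) ℂ) + (dd1 l0 l1 k) • (A - l0 • 1)
          + (dd2 l0 l1 l2 k) • ((A - l0 • 1) * (A - l1 • 1))‖
        ≤ ‖(l0 ^ k) • (1 : Matrix (Fin 3) (Fin 3) ℂ) + (dd1 l0 l1 k) • (A - l0 • 1)‖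
          + ‖(dd2 l0 l1 l2 k) • ((A - l0 • 1) * (A - l1 • 1))‖ := norm_add_le _ _
      _ ≤ ‖(l0 ^ k) • (1 : Matrix (Fin 3) (Fin 3) ℂ)‖ + ‖(dd1 l0 l1 k) • (A - l0 • 1)‖
          + ‖(dd2 l0 l1 l2 k) • ((A - l0 • 1) * (A - l1 • 1))‖ := by
            have := norm_add_le ((l0 ^ k) • (1 : Matrix (Fin 3) (Fin 3) ℂ))
              ((dd1 l0 l1 k) • (A - l0 • 1))
            linarith
      _ ≤ ρ^k + ‖dd1 l0 l1 k‖ * (2*‖H‖) + ‖dd2 l0 l1 l2 k‖ * ((2*‖H‖) * (2*‖H‖)) := by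
            rw [t1]
            have := hl0k
            linarith
  -- from ℝ to ℂ
  have hHk : ‖H ^ k‖ ≤ ‖A ^ k‖ := by
    have hmap : A ^ k = (H ^ k).map (algebraMap ℝ ℂ) := by
      rw [hAdef]
      simpa [RingHom.mapMatrix_apply] using (map_pow ((algebraMap ℝ ℂ).mapMatrix) H k).symm
    calc ‖H ^ k‖ ≤ ‖(H ^ k).map (algebraMap ℝ ℂ)‖ := aux_le_norm_map (H ^ k)
      _ = ‖A ^ k‖ := (congrArg norm hmap).symm
  -- arithmetic
  have hd1 := stmt13_dd1_bound l0 l1 ρ ε hε0 hρ0 hl0ρ hl1ρ k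
  have hd2 := stmt13_dd2_bound l0 l1 l2 ρ ε hε0 hρ0 hl0ρ hl1ρ hl2ρ k
  have hP0 : (0:ℝ) < (ρ + ε)^k := by positivity
  have hρk : ρ^k ≤ (ρ+ε)^k := pow_le_pow_left₀ hρ0 (by linarith) k
  have hs3 : (1:ℝ) ≤ Real.sqrt 3 := by
    rw [show (1:ℝ) = Real.sqrt 1 by simp]
    exact Real.sqrt_le_sqrt (by norm_num)
  have hmax : max (4 * ‖H‖ ^ 2 / ε ^ 2) (ε ^ 2 / (4 * ‖H‖ ^ 2)) = 4 * ‖H‖ ^ 2 / ε ^ 2 := by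
    apply max_eq_left
    have h1 : ε^2 ≤ 4 * ‖H‖^2 := by nlinarith
    have h2 : ε ^ 2 / (4 * ‖H‖ ^ 2) ≤ 1 := by
      rw [div_le_one (by positivity)]
      exact h1
    have h3 : (1:ℝ) ≤ 4 * ‖H‖ ^ 2 / ε ^ 2 := by
      rw [le_div_iff₀ (by positivity)]
      linarith
    linarith
  rw [hc₃, hmax]
  -- final chain
  have e24 : ε^2 ≤ 4*‖H‖^2 := by nlinarith
  have key : ε^2 * ‖H ^ k‖ ≤ 12 * ‖H‖^2 * (ρ+ε)^k := by
    have b1 : ε^2 * ρ^k ≤ 4 * ‖H‖^2 * (ρ+ε)^k :=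
      calc ε^2 * ρ^k ≤ ε^2 * (ρ+ε)^k := mul_le_mul_of_nonneg_left hρk (by positivity)
        _ ≤ 4*‖H‖^2 * (ρ+ε)^k := mul_le_mul_of_nonneg_right e24 hP0.le
    have b2 : ε^2 * (‖dd1 l0 l1 k‖ * (2*‖H‖)) ≤ 4 * ‖H‖^2 * (ρ+ε)^k :=
      calc ε^2 * (‖dd1 l0 l1 k‖ * (2*‖H‖)) = (2*‖H‖*ε) * (ε * ‖dd1 l0 l1 k‖) := by ring
        _ ≤ (2*‖H‖*ε) * (ρ+ε)^k := mul_le_mul_of_nonneg_left hd1 (by positivity)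
        _ ≤ 4*‖H‖^2 * (ρ+ε)^k := mul_le_mul_of_nonneg_right (by nlinarith) hP0.le
    have b3 : ε^2 * (‖dd2 l0 l1 l2 k‖ * ((2*‖H‖) * (2*‖H‖))) ≤ 4 * ‖H‖^2 * (ρ+ε)^k :=
      calc ε^2 * (‖dd2 l0 l1 l2 k‖ * ((2*‖H‖) * (2*‖H‖)))
          = (4*‖H‖^2) * (ε^2 * ‖dd2 l0 l1 l2 k‖) := by ring
        _ ≤ 4*‖H‖^2 * (ρ+ε)^k := mul_le_mul_of_nonneg_left hd2 (by positivity)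
    calc ε^2 * ‖H ^ k‖
        ≤ ε^2 * (ρ^k + ‖dd1 l0 l1 k‖ * (2*‖H‖) + ‖dd2 l0 l1 l2 k‖ * ((2*‖H‖) * (2*‖H‖))) :=
          mul_le_mul_of_nonneg_left (hHk.trans hAk) (by positivity)
      _ = ε^2 * ρ^k + ε^2 * (‖dd1 l0 l1 k‖ * (2*‖H‖))
          + ε^2 * (‖dd2 l0 l1 l2 k‖ * ((2*‖H‖) * (2*‖H‖))) := by ring
      _ ≤ 12 * ‖H‖^2 * (ρ+ε)^k := by linarith
  rw [show 3 * Real.sqrt 3 * (4 * ‖H‖ ^ 2 / ε ^ 2) * (ρ + ε) ^ k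
      = (Real.sqrt 3 * (12 * ‖H‖^2 * (ρ+ε)^k)) / ε^2 by ring]
  rw [le_div_iff₀ (by positivity)]
  have last : 12*‖H‖^2*(ρ+ε)^k ≤ Real.sqrt 3 * (12*‖H‖^2*(ρ+ε)^k) :=
    le_mul_of_one_le_left (by positivity) hs3
  linarith
end

section
/- Let H be a 3×3 real matrix with nonnegative entries, and let Θ, E : ℕ → ℝ³ be sequences of entrywise-nonnegative vectors satisfying the componentwise inequality Θ(k+1) ≤ H·Θ(k) + E(k) for all k ∈ ℕ. Suppose there exist constants c₃ ≥ 1, C₁ ≥ 0 and rates 0 < γ̄ < γ such that ‖H^k‖ ≤ c₃·γ̄^k (spectral norm) and ‖E(k)‖ ≤ C₁·γ^k (Euclidean norm) for all k ∈ ℕ. Then for all k ∈ ℕ: ‖Θ(k)‖ ≤ ( c₃·‖Θ(0)‖ + c₃·C₁/(γ − γ̄) )·γ^k. -/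
open Matrix
open scoped Matrix.Norms.L2Operator

private lemma stmt14_unroll (H : Matrix (Fin 3) (Fin 3) ℝ)
    (hH_nonneg : ∀ i j, 0 ≤ H i j)
    (Θ E : ℕ → EuclideanSpace ℝ (Fin 3))
    (hΘ_nonneg : ∀ k i, 0 ≤ Θ k i)
    (hE_nonneg : ∀ k i, 0 ≤ E k i)
    (hrec : ∀ k i, Θ (k + 1) i ≤ (∑ j, H i j * Θ k j) + E k i) :
    ∀ k i, Θ k i ≤ ((H ^ k) *ᵥ (Θ 0 : Fin 3 → ℝ)) i
      + ∑ j ∈ Finset.range k, ((H ^ (k - 1 - j)) *ᵥ (E j : Fin 3 → ℝ)) i := by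
  intro k
  induction k with
  | zero => intro i; simp [Matrix.one_mulVec]
  | succ k ih =>
    intro i
    have h1 : Θ (k + 1) i ≤ (H *ᵥ (Θ k : Fin 3 → ℝ)) i + E k i := hrec k i
    have h2 : (H *ᵥ (Θ k : Fin 3 → ℝ)) i ≤
        (H *ᵥ (fun j => ((H ^ k) *ᵥ (Θ 0 : Fin 3 → ℝ)) j
          + ∑ l ∈ Finset.range k, ((H ^ (k - 1 - l)) *ᵥ (E l : Fin 3 → ℝ)) j)) i := by
      simp only [Matrix.mulVec, dotProduct]
      exact Finset.sum_le_sum fun j _ => by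
        exact mul_le_mul_of_nonneg_left (ih j) (hH_nonneg i j)
    have h3 : (H *ᵥ (fun j => ((H ^ k) *ᵥ (Θ 0 : Fin 3 → ℝ)) j
          + ∑ l ∈ Finset.range k, ((H ^ (k - 1 - l)) *ᵥ (E l : Fin 3 → ℝ)) j)) i
        = ((H ^ (k + 1)) *ᵥ (Θ 0 : Fin 3 → ℝ)) i
          + ∑ l ∈ Finset.range k, ((H ^ (k - l)) *ᵥ (E l : Fin 3 → ℝ)) i := by
      simp only [Matrix.mulVec, dotProduct, mul_add, Finset.mul_sum,
        Finset.sum_add_distrib]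
      congr 1
      · rw [pow_succ']
        simp [Matrix.mulVec, dotProduct, Matrix.mul_apply, Finset.sum_mul,
          Finset.mul_sum, mul_assoc]
        rw [Finset.sum_comm]
      · rw [Finset.sum_comm]
        refine Finset.sum_congr rfl fun l hl => ?_
        have : k - l = (k - 1 - l) + 1 := by
          have := Finset.mem_range.mp hl; omega
        rw [this, pow_succ']
        simp [Matrix.mulVec, dotProduct, Matrix.mul_apply, Finset.sum_mul,
          Finset.mul_sum, mul_assoc]
        rw [Finset.sum_comm]
    have h4 : ∑ l ∈ Finset.range (k + 1), ((H ^ (k + 1 - 1 - l)) *ᵥ (E l : Fin 3 → ℝ)) i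
        = (∑ l ∈ Finset.range k, ((H ^ (k - l)) *ᵥ (E l : Fin 3 → ℝ)) i) + E k i := by
      have hlast : ((H ^ (k + 1 - 1 - k)) *ᵥ (E k : Fin 3 → ℝ)) i = E k i := by
        norm_num [Matrix.one_mulVec]
      rw [Finset.sum_range_succ, hlast]
      simp only [Nat.add_sub_cancel]
    calc Θ (k + 1) i ≤ (H *ᵥ (Θ k : Fin 3 → ℝ)) i + E k i := h1
      _ ≤ ((H ^ (k + 1)) *ᵥ (Θ 0 : Fin 3 → ℝ)) i
            + (∑ l ∈ Finset.range k, ((H ^ (k - l)) *ᵥ (E l : Fin 3 → ℝ)) i) + E k i := by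
          have := h2.trans_eq h3; linarith
      _ = _ := by rw [h4]; ring

/-- induction step for linear convergence. If `Θ(k+1) ≤ HΘ(k) + E(k)`
componentwise with `H` entrywise nonnegative, `‖H^k‖ ≤ c₃·γ̄^k` (spectral norm),
`‖E(k)‖ ≤ C₁·γ^k` with `0 < γ̄ < γ`, then
`‖Θ(k)‖ ≤ (c₃‖Θ(0)‖ + c₃C₁/(γ − γ̄))·γ^k` for all `k`. -/
theorem stmt14 (H : Matrix (Fin 3) (Fin 3) ℝ)
    (hH_nonneg : ∀ i j, 0 ≤ H i j)
    (Θ E : ℕ → EuclideanSpace ℝ (Fin 3))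
    (hΘ_nonneg : ∀ k i, 0 ≤ Θ k i)
    (hE_nonneg : ∀ k i, 0 ≤ E k i)
    (hrec : ∀ k i, Θ (k + 1) i ≤ (∑ j, H i j * Θ k j) + E k i)
    (c₃ C₁ γbar γ : ℝ)
    (hc₃ : 1 ≤ c₃) (hC₁ : 0 ≤ C₁)
    (hγbar : 0 < γbar) (hγ : γbar < γ)
    (hHk : ∀ k : ℕ, ‖H ^ k‖ ≤ c₃ * γbar ^ k)
    (hEk : ∀ k : ℕ, ‖E k‖ ≤ C₁ * γ ^ k) :
    ∀ k : ℕ, ‖Θ k‖ ≤ (c₃ * ‖Θ 0‖ + c₃ * C₁ / (γ - γbar)) * γ ^ k := by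
  intro k
  have hγ0 : 0 < γ := hγbar.trans hγ
  have hdiff : 0 < γ - γbar := sub_pos.mpr hγ
  -- the dominating vector
  set v : EuclideanSpace ℝ (Fin 3) :=
    (EuclideanSpace.equiv (Fin 3) ℝ).symm ((H ^ k) *ᵥ (Θ 0 : Fin 3 → ℝ))
      + ∑ j ∈ Finset.range k,
        (EuclideanSpace.equiv (Fin 3) ℝ).symm ((H ^ (k - 1 - j)) *ᵥ (E j : Fin 3 → ℝ)) with hv
  have hvi : ∀ i, v i = ((H ^ k) *ᵥ (Θ 0 : Fin 3 → ℝ)) i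
      + ∑ j ∈ Finset.range k, ((H ^ (k - 1 - j)) *ᵥ (E j : Fin 3 → ℝ)) i := by
    intro i
    simp only [hv, PiLp.add_apply]
    congr 1
    rw [WithLp.ofLp_sum]; exact Finset.sum_apply i (Finset.range k) _
  have hdom : ∀ i, Θ k i ≤ v i := fun i =>
    (stmt14_unroll H hH_nonneg Θ E hΘ_nonneg hE_nonneg hrec k i).trans_eq (hvi i).symm
  have hnormle : ‖Θ k‖ ≤ ‖v‖ := by
    rw [EuclideanSpace.norm_eq, EuclideanSpace.norm_eq]
    apply Real.sqrt_le_sqrt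
    apply Finset.sum_le_sum
    intro i _
    have h0 : 0 ≤ Θ k i := hΘ_nonneg k i
    have := hdom i
    rw [Real.norm_eq_abs, Real.norm_eq_abs, abs_of_nonneg h0, abs_of_nonneg (h0.trans this)]
    exact pow_le_pow_left₀ h0 this 2
  have hvbound : ‖v‖ ≤ c₃ * γbar ^ k * ‖Θ 0‖
      + ∑ j ∈ Finset.range k, c₃ * γbar ^ (k - 1 - j) * (C₁ * γ ^ j) := by
    refine (norm_add_le _ _).trans ?_
    gcongr
    · calc ‖(EuclideanSpace.equiv (Fin 3) ℝ).symm ((H ^ k) *ᵥ (Θ 0 : Fin 3 → ℝ))‖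
          ≤ ‖H ^ k‖ * ‖Θ 0‖ := Matrix.l2_opNorm_mulVec _ _
        _ ≤ c₃ * γbar ^ k * ‖Θ 0‖ := by gcongr; exact hHk k
    · refine (norm_sum_le _ _).trans ?_
      apply Finset.sum_le_sum
      intro j _
      calc ‖(EuclideanSpace.equiv (Fin 3) ℝ).symm ((H ^ (k - 1 - j)) *ᵥ (E j : Fin 3 → ℝ))‖
          ≤ ‖H ^ (k - 1 - j)‖ * ‖E j‖ := Matrix.l2_opNorm_mulVec _ _
        _ ≤ c₃ * γbar ^ (k - 1 - j) * (C₁ * γ ^ j) := by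
            apply mul_le_mul (hHk _) (hEk j) (norm_nonneg _)
            positivity
  -- geometric sum bound
  have hsum : ∑ j ∈ Finset.range k, γbar ^ (k - 1 - j) * γ ^ j ≤ γ ^ k / (γ - γbar) := by
    have hg := geom_sum₂_mul γ γbar k
    have : ∑ j ∈ Finset.range k, γbar ^ (k - 1 - j) * γ ^ j
        = ∑ j ∈ Finset.range k, γ ^ j * γbar ^ (k - 1 - j) := by
      exact Finset.sum_congr rfl fun j _ => mul_comm _ _
    rw [this, le_div_iff₀ hdiff]
    nlinarith [pow_nonneg hγbar.le k]
  have hsum' : ∑ j ∈ Finset.range k, c₃ * γbar ^ (k - 1 - j) * (C₁ * γ ^ j)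
      ≤ c₃ * C₁ * (γ ^ k / (γ - γbar)) := by
    have : ∑ j ∈ Finset.range k, c₃ * γbar ^ (k - 1 - j) * (C₁ * γ ^ j)
        = c₃ * C₁ * ∑ j ∈ Finset.range k, γbar ^ (k - 1 - j) * γ ^ j := by
      rw [Finset.mul_sum]; exact Finset.sum_congr rfl fun j _ => by ring
    rw [this]
    apply mul_le_mul_of_nonneg_left hsum (by positivity)
  calc ‖Θ k‖ ≤ ‖v‖ := hnormle
    _ ≤ c₃ * γbar ^ k * ‖Θ 0‖ + ∑ j ∈ Finset.range k, c₃ * γbar ^ (k - 1 - j) * (C₁ * γ ^ j) :=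
        hvbound
    _ ≤ c₃ * γ ^ k * ‖Θ 0‖ + c₃ * C₁ * (γ ^ k / (γ - γbar)) := by
        gcongr
    _ = (c₃ * ‖Θ 0‖ + c₃ * C₁ / (γ - γbar)) * γ ^ k := by field_simp
end
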